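/- arXiv:math/0111333 — 4 statements merged into one kernel-verified Lean document; each statement's English description precedes it below -/
import Mathlib

section
/- Let q > 2 be a power of an odd prime p and let M be a finite free (ℤ/qℤ)-module of rank n+2 equipped with a non-degenerate alternating-type bilinear pairing B : M × M → ℤ/qℤ (i.e. the induced map M → Hom(M, ℤ/qℤ) is bijective). If V ⊆ M is a submodule that is totally isotropic (B(v,w)=0 for all v,w ∈ V) and free as a (ℤ/qℤ)-module, then rank V ≤ n/2 + 1. -/
lemma zmod_exists_mul {q : ℕ} [NeZero q] (a b : ZMod q)
    (h : ∀ y : ZMod q, y * a = 0 → y * b = 0) : ∃ c, b = a * c := by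
  have hq : 0 < q := Nat.pos_of_ne_zero (NeZero.ne q)
  set A := a.val with hA
  set g := Nat.gcd A q with hg
  have hg0 : 0 < g := Nat.gcd_pos_of_pos_right _ hq
  have hgA : g ∣ A := Nat.gcd_dvd_left _ _
  have hgq : g ∣ q := Nat.gcd_dvd_right _ _
  have ha : ((A : ℕ) : ZMod q) = a := by rw [hA, ZMod.natCast_val, ZMod.cast_id]
  have h1 : ((q / g : ℕ) : ZMod q) * a = 0 := by
    rw [← ha, ← Nat.cast_mul, ZMod.natCast_eq_zero_iff]
    obtain ⟨A', hA'⟩ := hgA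
    exact ⟨A', by rw [hA', ← mul_assoc, Nat.div_mul_cancel hgq]⟩
  have h2 := h _ h1
  have hb : ((b.val : ℕ) : ZMod q) = b := by rw [ZMod.natCast_val, ZMod.cast_id]
  have h3 : g ∣ b.val := by
    rw [← hb, ← Nat.cast_mul, ZMod.natCast_eq_zero_iff] at h2
    have hqq : q / g * g = q := Nat.div_mul_cancel hgq
    have hpos : 0 < q / g := Nat.div_pos (Nat.le_of_dvd hq hgq) hg0
    obtain ⟨t, ht⟩ := h2
    -- q/g * g ∣ q/g * b.val
    have : q / g * g ∣ q / g * b.val := by rw [hqq]; exact ⟨t, ht⟩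
    exact (Nat.mul_dvd_mul_iff_left hpos).mp this
  obtain ⟨t, ht⟩ := h3
  have bez := Nat.gcd_eq_gcd_ab A q
  have hgz : ((g : ℕ) : ZMod q) = a * ((Nat.gcdA A q : ℤ) : ZMod q) := by
    have : (((g : ℤ) : ZMod q)) = ((A : ℤ) * Nat.gcdA A q + (q : ℤ) * Nat.gcdB A q : ℤ) := by
      exact_mod_cast congrArg (fun z : ℤ => ((z : ZMod q))) bez
    push_cast at this
    rw [ZMod.natCast_self] at this
    simpa [ha] using this
  refine ⟨((Nat.gcdA A q : ℤ) : ZMod q) * (t : ℕ), ?_⟩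
  rw [← hb, ht]
  push_cast
  rw [hgz]
  ring

lemma zmod_pir (q : ℕ) : IsPrincipalIdealRing (ZMod q) :=
  IsPrincipalIdealRing.of_surjective (Int.castRingHom (ZMod q)) ZMod.intCast_surjective

lemma zmod_baer (q : ℕ) [NeZero q] : Module.Baer (ZMod q) (ZMod q) := by
  haveI := zmod_pir q
  intro I g
  obtain ⟨a, ha⟩ := (IsPrincipalIdealRing.principal I).principal
  have haI : a ∈ I := by rw [ha]; exact Submodule.mem_span_singleton_self a
  set b := g ⟨a, haI⟩ with hb
  have hann : ∀ y : ZMod q, y * a = 0 → y * b = 0 := by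
    intro y hy
    have h0 : y • (⟨a, haI⟩ : I) = 0 := by
      ext
      simpa [smul_eq_mul] using hy
    calc y * b = y • b := rfl
      _ = g (y • ⟨a, haI⟩) := (g.map_smul y _).symm
      _ = g 0 := by rw [h0]
      _ = 0 := g.map_zero
  obtain ⟨c, hc⟩ := zmod_exists_mul a b hann
  refine ⟨LinearMap.toSpanSingleton (ZMod q) (ZMod q) c, fun x hx => ?_⟩
  have hx' : x ∈ Submodule.span (ZMod q) {a} := ha ▸ hx
  obtain ⟨y, hy⟩ := Ideal.mem_span_singleton'.mp (by exact hx')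
  have hxy : (⟨x, hx⟩ : I) = y • ⟨a, haI⟩ := by
    ext
    simp [← hy, smul_eq_mul]
  rw [hxy, g.map_smul]
  simp only [LinearMap.toSpanSingleton_apply, ← hb, smul_eq_mul, ← hy, hc]
  ring


/-- a totally isotropic free submodule of a free `ℤ/qℤ`-module of rank
`n + 2` with a non-degenerate alternating pairing has rank at most `n/2 + 1`. -/
theorem stmt_0 {p q n : ℕ} (hp : p.Prime) (hodd : Odd p) (hq : ∃ k, q = p ^ k)
    (hq2 : 2 < q) (hn : Even n)
    (M : Type*) [AddCommGroup M] [Module (ZMod q) M]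
    [Module.Free (ZMod q) M] [Module.Finite (ZMod q) M]
    (hrank : Module.finrank (ZMod q) M = n + 2)
    (B : M →ₗ[ZMod q] M →ₗ[ZMod q] ZMod q)
    (hBnd : Function.Bijective fun m : M => B m)
    (hBalt : ∀ m : M, B m m = 0)
    (V : Submodule (ZMod q) M) [Module.Free (ZMod q) V]
    (hV : ∀ v ∈ V, ∀ w ∈ V, B v w = 0) :
    Module.finrank (ZMod q) V ≤ n / 2 + 1 := by
  haveI : NeZero q := ⟨by omega⟩
  haveI : Fact (1 < q) := ⟨by omega⟩
  haveI := zmod_pir q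
  -- bases
  let bM : Module.Basis (Fin (n + 2)) (ZMod q) M := Module.finBasisOfFinrankEq (ZMod q) M hrank
  haveI : Finite M := Finite.of_equiv _ bM.equivFun.symm.toEquiv
  set r := Module.finrank (ZMod q) V with hr
  let bV : Module.Basis (Fin r) (ZMod q) V := Module.finBasis (ZMod q) V
  -- the map φ : M → (Fin r → ZMod q), m ↦ (i ↦ B m (bV i))
  set φ : M →ₗ[ZMod q] (Fin r → ZMod q) :=
    LinearMap.pi (fun i : Fin r => B.flip ((bV i : V) : M)) with hφ
  have hφ_apply : ∀ (m : M) (i : Fin r), φ m i = B m ((bV i : V) : M) := fun m i => rfl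
  -- V is contained in ker φ
  have hVker : V ≤ LinearMap.ker φ := by
    intro v hv
    rw [LinearMap.mem_ker]
    funext i
    exact hV v hv _ (bV i).2
  -- φ is surjective
  have hsurj : Function.Surjective φ := by
    intro f
    let fV : V →ₗ[ZMod q] ZMod q := bV.constr ℕ f
    obtain ⟨gM, hgM⟩ := (zmod_baer q).extension_property V.subtype V.injective_subtype fV
    obtain ⟨m, hm⟩ := hBnd.2 gM
    refine ⟨m, funext fun i => ?_⟩
    have h1 : B m ((bV i : V) : M) = gM ((bV i : V) : M) := by rw [show B m = gM from hm]
    have h2 : gM ((bV i : V) : M) = fV (bV i) := by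
      have := congrArg (fun (h : V →ₗ[ZMod q] ZMod q) => h (bV i)) hgM
      simpa using this
    rw [hφ_apply, h1, h2]
    simp [fV, Module.Basis.constr_basis]
  -- cardinalities
  have cardR : Nat.card (ZMod q) = q := by simp [Nat.card_eq_fintype_card, ZMod.card]
  have cardM : Nat.card M = q ^ (n + 2) := by
    rw [Nat.card_congr bM.equivFun.toEquiv]
    simp [Nat.card_eq_fintype_card, ZMod.card]
  have cardV : Nat.card V = q ^ r := by
    rw [Nat.card_congr bV.equivFun.toEquiv]
    simp [Nat.card_eq_fintype_card, ZMod.card]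
  have cardQuot : Nat.card (M ⧸ LinearMap.ker φ) = q ^ r := by
    rw [Nat.card_congr (LinearMap.quotKerEquivOfSurjective φ hsurj).toEquiv]
    simp [Nat.card_eq_fintype_card, ZMod.card]
  have keycard := Submodule.card_eq_card_quotient_mul_card (LinearMap.ker φ)
  have hVle : Nat.card V ≤ Nat.card (LinearMap.ker φ) :=
    Nat.card_le_card_of_injective (Submodule.inclusion hVker)
      (Submodule.inclusion_injective hVker)
  have hineq : q ^ r * q ^ r ≤ q ^ (n + 2) := by
    calc q ^ r * q ^ r ≤ Nat.card (LinearMap.ker φ) * q ^ r := by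
          rw [← cardV]; exact Nat.mul_le_mul_right _ hVle
      _ = Nat.card (LinearMap.ker φ) * Nat.card (M ⧸ LinearMap.ker φ) := by rw [cardQuot]
      _ = Nat.card M := by rw [keycard, mul_comm]
      _ = q ^ (n + 2) := cardM
  rw [← pow_add] at hineq
  have hle : r + r ≤ n + 2 := (Nat.pow_le_pow_iff_right (by omega : 1 < q)).mp hineq
  obtain ⟨t, rfl⟩ := hn
  omega
end

section
/- Let Δ be a finite group and G a finite p-group on which Δ acts by automorphisms, with gcd(|Δ|, p) = 1. Let G_Δ denote the maximal quotient of G on which the induced Δ-action is trivial, i.e. G_Δ = G/N where N is the normal subgroup generated by {g⁻¹·σ(g) : g ∈ G, σ ∈ Δ}. Then for the semidirect product 𝒢 = G ⋊ Δ, the maximal p-quotient 𝒢(p) of 𝒢 is canonically isomorphic to G_Δ. -/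
/-- for a finite `p`-group `G` with an action of a finite group `Δ` of
order prime to `p`, the maximal `p`-quotient of the semidirect product `G ⋊ Δ` is
canonically isomorphic to the maximal quotient `G_Δ` of `G` with trivial `Δ`-action,
where `G_Δ = G/N` with `N` the normal subgroup generated by the `g⁻¹·σ(g)`. -/
theorem stmt_5 {p : ℕ} (hp : p.Prime)
    (G Δ : Type*) [Group G] [Group Δ] [Finite G] [Finite Δ]
    (hG : IsPGroup p G) (hcop : Nat.Coprime (Nat.card Δ) p)
    (φ : Δ →* MulAut G)
    (K : Subgroup (G ⋊[φ] Δ)) [K.Normal]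
    (hKp : IsPGroup p ((G ⋊[φ] Δ) ⧸ K))
    (hKmin : ∀ (K' : Subgroup (G ⋊[φ] Δ)) [K'.Normal],
      IsPGroup p ((G ⋊[φ] Δ) ⧸ K') → K ≤ K') :
    ∃ e : ((G ⋊[φ] Δ) ⧸ K) ≃*
        (G ⧸ Subgroup.normalClosure {x : G | ∃ (g : G) (d : Δ), x = g⁻¹ * φ d g}),
      ∀ g : G, e (QuotientGroup.mk (SemidirectProduct.inl g)) = QuotientGroup.mk g := by
  set N := Subgroup.normalClosure {x : G | ∃ (g : G) (d : Δ), x = g⁻¹ * φ d g} with hN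
  -- the map π : G ⋊ Δ →* G ⧸ N
  have hcompat : ∀ d : Δ, (QuotientGroup.mk' N).comp (φ d).toMonoidHom =
      (MulAut.conj ((1 : Δ →* G ⧸ N) d)).toMonoidHom.comp (QuotientGroup.mk' N) := by
    intro d
    ext g
    simp only [MonoidHom.comp_apply, MulEquiv.coe_toMonoidHom, QuotientGroup.mk'_apply,
      MonoidHom.one_apply, map_one, MulAut.one_apply]
    rw [QuotientGroup.eq]
    have hm : g⁻¹ * φ d g ∈ N := Subgroup.subset_normalClosure (by exact ⟨g, d, rfl⟩)
    simpa [mul_inv_rev] using Subgroup.inv_mem N hm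
  let π : (G ⋊[φ] Δ) →* G ⧸ N := SemidirectProduct.lift (QuotientGroup.mk' N) 1 hcompat
  have hπinl : ∀ g : G, π (SemidirectProduct.inl g) = QuotientGroup.mk g := fun g => by
    simp [π]
  have hπinr : ∀ d : Δ, π (SemidirectProduct.inr d) = 1 := fun d => by
    simp [π]
  -- K ≤ ker π
  have hKker : K ≤ π.ker := by
    refine hKmin π.ker ?_
    exact IsPGroup.of_injective (hG.to_quotient N)
      (QuotientGroup.kerLift π) (QuotientGroup.kerLift_injective π)
  have hπK : ∀ x ∈ K, π x = 1 := fun x hx => MonoidHom.mem_ker.mp (hKker hx)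
  let πbar : ((G ⋊[φ] Δ) ⧸ K) →* G ⧸ N := QuotientGroup.lift K π hπK
  -- inr d is trivial in the quotient by K
  have hinr1 : ∀ d : Δ, (QuotientGroup.mk (SemidirectProduct.inr d : G ⋊[φ] Δ) :
      (G ⋊[φ] Δ) ⧸ K) = 1 := by
    intro d
    set x : (G ⋊[φ] Δ) ⧸ K := QuotientGroup.mk (SemidirectProduct.inr d) with hx
    obtain ⟨k, hk⟩ := hKp x
    have h1 : orderOf x ∣ p ^ k := orderOf_dvd_of_pow_eq_one hk
    have h2 : orderOf x ∣ Nat.card Δ := by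
      apply orderOf_dvd_of_pow_eq_one
      have : (SemidirectProduct.inr d : G ⋊[φ] Δ) ^ Nat.card Δ = 1 := by
        rw [← map_pow, pow_card_eq_one', map_one]
      rw [hx, ← QuotientGroup.mk_pow, this, QuotientGroup.mk_one]
    have hco : Nat.Coprime (Nat.card Δ) (p ^ k) := hcop.pow_right k
    have : orderOf x = 1 := Nat.eq_one_of_dvd_coprimes hco h2 h1
    exact orderOf_eq_one_iff.mp this
  -- the map f : G →* (G ⋊ Δ) ⧸ K
  let f : G →* ((G ⋊[φ] Δ) ⧸ K) :=
    (QuotientGroup.mk' K).comp (SemidirectProduct.inl (φ := φ))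
  have hfN : N ≤ f.ker := by
    apply Subgroup.normalClosure_le_normal
    rintro x ⟨g, d, rfl⟩
    have hmem : f (g⁻¹ * φ d g) = 1 := by
      simp only [f, MonoidHom.comp_apply, QuotientGroup.mk'_apply, map_mul, map_inv,
        SemidirectProduct.inl_aut, QuotientGroup.mk_mul, QuotientGroup.mk_inv, hinr1]
      group
    exact MonoidHom.mem_ker.mpr hmem
  have hfmem : ∀ x ∈ N, f x = 1 := fun x hx => MonoidHom.mem_ker.mp (hfN hx)
  let fbar : (G ⧸ N) →* ((G ⋊[φ] Δ) ⧸ K) := QuotientGroup.lift N f hfmem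
  have hπbarinl : ∀ g : G, πbar (QuotientGroup.mk (SemidirectProduct.inl g)) =
      QuotientGroup.mk g := fun g => by
    exact hπinl g
  have hfbarmk : ∀ g : G, fbar (QuotientGroup.mk g) =
      QuotientGroup.mk (SemidirectProduct.inl g) := fun g => rfl
  refine ⟨{ toFun := πbar, invFun := fbar, map_mul' := map_mul πbar,
            left_inv := ?_, right_inv := ?_ }, fun g => hπbarinl g⟩
  · intro x
    induction x using QuotientGroup.induction_on with
    | H x =>
      have h1 : πbar (QuotientGroup.mk (SemidirectProduct.inr x.right : G ⋊[φ] Δ)) = 1 := by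
        exact hπinr x.right
      rw [← SemidirectProduct.inl_left_mul_inr_right x, QuotientGroup.mk_mul, map_mul, map_mul,
        hπbarinl, h1, map_one, hinr1, mul_one, mul_one, hfbarmk]
  · intro y
    induction y using QuotientGroup.induction_on with
    | H g => rw [hfbarmk, hπbarinl]
end

section
/- Let p be an odd prime, V a finite-dimensional 𝔽_p-vector space with non-degenerate alternating bilinear pairing B of dimension 2m, and let σ be an involution of V with B(σx,σy) = -B(x,y). If U ⊆ V⁺ (the +1 eigenspace of σ) is a subspace, then there exists a subspace W ⊆ V⁻ with W ⊆ U^⊥ and dim W = m - dim U, and U ⊕ W is totally isotropic of dimension m. -/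
/-- The orthogonal complement of a submodule with respect to a bilinear pairing. -/
def orthoComp {R M : Type*} [CommRing R] [AddCommGroup M] [Module R M]
    (B : M →ₗ[R] M →ₗ[R] R) (K : Submodule R M) : Submodule R M where
  carrier := {v | ∀ k ∈ K, B v k = 0}
  add_mem' := by
    intro a b ha hb k hk
    simp [ha k hk, hb k hk]
  zero_mem' := by intro k hk; simp
  smul_mem' := by
    intro c a ha k hk
    simp [ha k hk]

/-- for a non-degenerate alternating pairing `B` on a `2m`-dimensional
`𝔽_p`-vector space (`p` odd) and an involution `σ` with `B(σx,σy) = -B(x,y)`, any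
subspace `U` of the `+1`-eigenspace `V⁺` extends by some `W ⊆ V⁻ ∩ U^⊥` of dimension
`m - dim U` to a totally isotropic subspace `U ⊕ W` of dimension `m`. -/
theorem stmt_15 {p m : ℕ} [Fact p.Prime] (hodd : Odd p)
    (V : Type*) [AddCommGroup V] [Module (ZMod p) V] [FiniteDimensional (ZMod p) V]
    (hdim : Module.finrank (ZMod p) V = 2 * m)
    (B : V →ₗ[ZMod p] V →ₗ[ZMod p] ZMod p)
    (hBnd : Function.Bijective fun v : V => B v)
    (hBalt : ∀ v : V, B v v = 0)
    (σ : V →ₗ[ZMod p] V) (hσ : σ ∘ₗ σ = LinearMap.id)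
    (hBσ : ∀ x y : V, B (σ x) (σ y) = - B x y)
    (U : Submodule (ZMod p) V) (hU : U ≤ LinearMap.ker (σ - LinearMap.id)) :
    ∃ W : Submodule (ZMod p) V,
      W ≤ LinearMap.ker (σ + LinearMap.id) ∧
      W ≤ orthoComp B U ∧
      Module.finrank (ZMod p) W = m - Module.finrank (ZMod p) U ∧
      (∀ x ∈ U ⊔ W, ∀ y ∈ U ⊔ W, B x y = 0) ∧
      Module.finrank (ZMod p) (U ⊔ W : Submodule (ZMod p) V) = m := by
  classical
  set Vp := LinearMap.ker (σ - LinearMap.id) with hVp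
  set Vm := LinearMap.ker (σ + LinearMap.id) with hVm
  have hmemp : ∀ x : V, x ∈ Vp ↔ σ x = x := by
    intro x
    simp [hVp, LinearMap.mem_ker, sub_eq_zero]
  have hmemm : ∀ x : V, x ∈ Vm ↔ σ x = -x := by
    intro x
    simp [hVm, LinearMap.mem_ker, add_eq_zero_iff_eq_neg]
  have hσσ : ∀ x : V, σ (σ x) = x := by
    intro x
    exact congrArg (· x) (congrArg DFunLike.coe hσ)
  have htwo : (2 : ZMod p) ≠ 0 := by
    have hp := (Fact.out : p.Prime)
    have hp2 : p ≠ 2 := by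
      rintro rfl
      rcases hodd with ⟨k, hk⟩
      omega
    intro h
    have : ((2 : ℕ) : ZMod p) = 0 := by exact_mod_cast h
    rw [ZMod.natCast_eq_zero_iff] at this
    exact hp2 ((Nat.prime_dvd_prime_iff_eq hp Nat.prime_two).mp this)
  -- skew symmetry
  have hskew : ∀ x y : V, B x y = - B y x := by
    intro x y
    have h := hBalt (x + y)
    simp only [map_add, LinearMap.add_apply, hBalt] at h
    have : B x y + B y x = 0 := by linear_combination h
    linear_combination this
  -- orthoComp dimension
  have horth : ∀ K : Submodule (ZMod p) V,
      Module.finrank (ZMod p) (orthoComp B K) + Module.finrank (ZMod p) K = 2 * m := by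
    intro K
    have heq : orthoComp B K = Submodule.comap B K.dualAnnihilator := by
      ext v
      simp only [Submodule.mem_comap, Submodule.mem_dualAnnihilator]
      rfl
    let e : V ≃ₗ[ZMod p] Module.Dual (ZMod p) V := LinearEquiv.ofBijective B hBnd
    have heq2 : Submodule.comap B K.dualAnnihilator
        = Submodule.map (e.symm : Module.Dual (ZMod p) V →ₗ[ZMod p] V) K.dualAnnihilator :=
      Submodule.comap_equiv_eq_map_symm e K.dualAnnihilator
    have h3 : Module.finrank (ZMod p) (orthoComp B K)
        = Module.finrank (ZMod p) K.dualAnnihilator := by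
      rw [heq, heq2]
      exact LinearEquiv.finrank_map_eq e.symm _
    have h4 : Module.finrank (ZMod p) K.dualAnnihilator
        = Module.finrank (ZMod p) (V ⧸ K) :=
      (LinearEquiv.finrank_eq (Subspace.quotEquivAnnihilator K)).symm
    rw [h3, h4, ← hdim]
    exact Submodule.finrank_quotient_add_finrank K
  -- isotropy of eigenspaces
  have hisop : ∀ x ∈ Vp, ∀ y ∈ Vp, B x y = 0 := by
    intro x hx y hy
    have h := hBσ x y
    rw [(hmemp x).mp hx, (hmemp y).mp hy] at h
    have h2 : (2 : ZMod p) * B x y = 0 := by linear_combination h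
    rcases mul_eq_zero.mp h2 with h | h
    · exact absurd h htwo
    · exact h
  have hisom : ∀ x ∈ Vm, ∀ y ∈ Vm, B x y = 0 := by
    intro x hx y hy
    have h := hBσ x y
    rw [(hmemm x).mp hx, (hmemm y).mp hy] at h
    simp only [map_neg, LinearMap.neg_apply, neg_neg] at h
    have h2 : (2 : ZMod p) * B x y = 0 := by linear_combination h
    rcases mul_eq_zero.mp h2 with h | h
    · exact absurd h htwo
    · exact h
  -- Vp ⊓ Vm = ⊥ and Vp ⊔ Vm = ⊤
  have hinf : Vp ⊓ Vm = ⊥ := by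
    rw [eq_bot_iff]
    rintro x ⟨hx1, hx2⟩
    have h1 := (hmemp x).mp hx1
    have h2 := (hmemm x).mp hx2
    have : (2 : ZMod p) • x = 0 := by
      rw [two_smul]
      exact add_eq_zero_iff_eq_neg.mpr (h1.symm.trans h2)
    rcases smul_eq_zero.mp this with h | h
    · exact absurd h htwo
    · exact h
  have hsup : Vp ⊔ Vm = ⊤ := by
    rw [eq_top_iff]
    intro v _
    have hv : v = (2 : ZMod p)⁻¹ • (v + σ v) + (2 : ZMod p)⁻¹ • (v - σ v) := by
      rw [← smul_add]
      have : v + σ v + (v - σ v) = (2 : ZMod p) • v := by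
        rw [two_smul]; abel
      rw [this, smul_smul, inv_mul_cancel₀ htwo, one_smul]
    rw [hv]
    apply Submodule.add_mem
    · exact Submodule.mem_sup_left (Submodule.smul_mem _ _ ((hmemp _).mpr (by
        simp only [map_add, hσσ]; abel)))
    · exact Submodule.mem_sup_right (Submodule.smul_mem _ _ ((hmemm _).mpr (by
        simp only [map_sub, hσσ]; abel)))
  -- dimensions of eigenspaces
  have hdims : Module.finrank (ZMod p) Vp + Module.finrank (ZMod p) Vm = 2 * m := by
    have := Submodule.finrank_sup_add_finrank_inf_eq Vp Vm
    rw [hsup, hinf, finrank_bot, finrank_top, hdim] at this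
    omega
  have hple : Vp ≤ orthoComp B Vp := fun x hx k hk => hisop x hx k hk
  have hmle : Vm ≤ orthoComp B Vm := fun x hx k hk => hisom x hx k hk
  have hpm : Module.finrank (ZMod p) Vp = m ∧ Module.finrank (ZMod p) Vm = m := by
    have h1 := Submodule.finrank_mono hple
    have h2 := Submodule.finrank_mono hmle
    have h3 := horth Vp
    have h4 := horth Vm
    omega
  -- U dimension bound
  have hUle : Module.finrank (ZMod p) U ≤ m := hpm.1 ▸ Submodule.finrank_mono hU
  -- Vp ≤ orthoComp B U
  have hpU : Vp ≤ orthoComp B U := fun x hx k hk => hisop x hx k (hU hk)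
  refine ⟨Vm ⊓ orthoComp B U, inf_le_left, inf_le_right, ?_, ?_, ?_⟩
  · -- dimension of W
    have hsup2 : Vm ⊔ orthoComp B U = ⊤ := by
      rw [eq_top_iff, ← hsup, sup_comm]
      exact sup_le_sup_left hpU _
    have := Submodule.finrank_sup_add_finrank_inf_eq Vm (orthoComp B U)
    rw [hsup2, finrank_top, hdim] at this
    have h5 := horth U
    omega
  · -- isotropy of U ⊔ W
    intro x hx y hy
    rcases Submodule.mem_sup.mp hx with ⟨u, hu, w, hw, rfl⟩
    rcases Submodule.mem_sup.mp hy with ⟨u', hu', w', hw', rfl⟩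
    have hwm := hw.1; have hwo := hw.2
    have hwm' := hw'.1; have hwo' := hw'.2
    simp only [map_add, LinearMap.add_apply]
    rw [hisop u (hU hu) u' (hU hu'), hwo u' hu', hisom w hwm w' hwm',
      hskew u w', hwo' u hu]
    ring
  · -- dimension of U ⊔ W
    have hWU : U ⊓ (Vm ⊓ orthoComp B U) = ⊥ := by
      rw [eq_bot_iff, ← hinf]
      exact le_inf (le_trans inf_le_left hU) (le_trans inf_le_right inf_le_left)
    have h6 := Submodule.finrank_sup_add_finrank_inf_eq U (Vm ⊓ orthoComp B U)
    rw [hWU, finrank_bot] at h6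
    -- finrank W
    have hsup2 : Vm ⊔ orthoComp B U = ⊤ := by
      rw [eq_top_iff, ← hsup, sup_comm]
      exact sup_le_sup_left hpU _
    have h7 := Submodule.finrank_sup_add_finrank_inf_eq Vm (orthoComp B U)
    rw [hsup2, finrank_top, hdim] at h7
    have h5 := horth U
    omega
end

section
/- Let p be an odd prime, q > 2 a power of p, and M a free (ℤ/qℤ)-module of rank n+2 with non-degenerate pairing B. Suppose L ⊆ M is a submodule with L^⊥ free of rank 1 (so L = (L^⊥)^⊥ has corank 1), and V ⊆ L is a free totally isotropic submodule of rank n/2 + 1. Then L^⊥ ⊆ V. -/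
section Aux

/-- In `ZMod (p ^ k)`, a non-unit is divisible by `p`. -/
lemma zmod_nonunit_eq {p k q : ℕ} (hp : p.Prime) (hq : q = p ^ k) [NeZero q]
    {a : ZMod q} (ha : ¬ IsUnit a) : ∃ b : ZMod q, a = (p : ZMod q) * b := by
  have h1 : ¬ Nat.Coprime a.val q := by
    intro h
    exact ha (by simpa [ZMod.natCast_zmod_val] using (ZMod.isUnit_iff_coprime a.val q).2 h)
  have hpd : p ∣ a.val := by
    by_contra hnd
    have hc : Nat.Coprime p a.val := (Nat.Prime.coprime_iff_not_dvd hp).2 hnd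
    exact h1 (by subst hq; exact hc.symm.pow_right k)
  obtain ⟨c, hc⟩ := hpd
  exact ⟨(c : ZMod q), by rw [← Nat.cast_mul, ← hc, ZMod.natCast_zmod_val]⟩

/-- On a finite free module over `ZMod (p ^ k)`, any "torsion-free" vector admits a
functional taking the value `1` on it. -/
lemma exists_dual_one {p k q : ℕ} (hp : p.Prime) (hq : q = p ^ k) (hk : 1 ≤ k)
    {M : Type*} [AddCommGroup M] [Module (ZMod q) M]
    [Module.Free (ZMod q) M] [Module.Finite (ZMod q) M]
    {x : M} (hx : ∀ c : ZMod q, c • x = 0 → c = 0) :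
    ∃ f : Module.Dual (ZMod q) M, f x = 1 := by
  haveI : NeZero q := ⟨by
    have h2 := hp.two_le
    have : 0 < p ^ k := pow_pos (by omega) k
    omega⟩
  classical
  set b := Module.Free.chooseBasis (ZMod q) M with hb
  by_cases hu : ∃ i, IsUnit (b.repr x i)
  · obtain ⟨i, u, hui⟩ := hu
    refine ⟨(↑u⁻¹ : ZMod q) • b.coord i, ?_⟩
    simp only [LinearMap.smul_apply, Module.Basis.coord_apply, smul_eq_mul, ← hui]
    exact u.inv_mul
  · push_neg at hu
    have key : ((p ^ (k - 1) : ℕ) : ZMod q) • x = 0 := by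
      conv_lhs => rw [← b.sum_repr x]
      rw [Finset.smul_sum]
      refine Finset.sum_eq_zero fun i _ => ?_
      obtain ⟨c, hc⟩ := zmod_nonunit_eq hp hq (hu i)
      rw [smul_smul, hc, ← mul_assoc, ← Nat.cast_mul, ← pow_succ,
        Nat.sub_add_cancel hk, ← hq, ZMod.natCast_self, zero_mul, zero_smul]
    have h0 := hx _ key
    rw [ZMod.natCast_eq_zero_iff, hq] at h0
    have hle := Nat.le_of_dvd (pow_pos hp.pos _) h0
    have := (Nat.pow_lt_pow_iff_right hp.one_lt).2 (by omega : k - 1 < k)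
    omega

/-- Any linearly independent family in a finite free module over `ZMod (p ^ k)` admits a
dual family of functionals. -/
lemma exists_dual_family {p k q : ℕ} (hp : p.Prime) (hq : q = p ^ k) (hk : 1 ≤ k)
    {M : Type*} [AddCommGroup M] [Module (ZMod q) M]
    [Module.Free (ZMod q) M] [Module.Finite (ZMod q) M] :
    ∀ (r : ℕ) (v : Fin r → M), LinearIndependent (ZMod q) v →
      ∃ g : Fin r → Module.Dual (ZMod q) M,
        ∀ i j, g i (v j) = if i = j then 1 else 0 := by
  intro r
  induction r with
  | zero => exact fun v _ => ⟨fun i => 0, fun i => i.elim0⟩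
  | succ r ih =>
    intro v hv
    classical
    have hv' := Fintype.linearIndependent_iff.mp hv
    have hx : ∀ c : ZMod q, c • v 0 = 0 → c = 0 := by
      intro c hc
      have := hv' (fun i => if i = 0 then c else 0) ?_ 0
      · simpa using this
      · rw [Finset.sum_eq_single 0]
        · simpa using hc
        · intro i _ hi; simp [hi]
        · simp
    obtain ⟨f, hf⟩ := exists_dual_one hp hq hk hx
    set w : Fin r → M := fun j => v j.succ - f (v j.succ) • v 0 with hwdef
    have hvw : ∀ j, v j.succ = w j + f (v j.succ) • v 0 := by
      intro j; simp [hwdef]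
    have hw : LinearIndependent (ZMod q) w := by
      rw [Fintype.linearIndependent_iff]
      intro g hg j
      have hsum : ∑ i : Fin (r + 1),
          (Fin.cases (-(∑ t, g t * f (v t.succ))) g i : ZMod q) • v i = 0 := by
        rw [Fin.sum_univ_succ]
        simp only [Fin.cases_zero, Fin.cases_succ]
        have expand : ∑ t, g t • v t.succ
            = (∑ t, g t * f (v t.succ)) • v 0 := by
          have : ∑ t, g t • w t = 0 := hg
          simp only [hwdef, smul_sub, Finset.sum_sub_distrib, sub_eq_zero] at this
          rw [this, Finset.sum_smul]
          exact Finset.sum_congr rfl fun t _ => by rw [smul_smul]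
        rw [expand, neg_smul, neg_add_cancel]
      have := hv' _ hsum j.succ
      simpa using this
    obtain ⟨g', hg'⟩ := ih w hw
    set gj : Fin r → Module.Dual (ZMod q) M :=
      fun i => g' i - g' i (v 0) • f with hgjdef
    have hgj0 : ∀ i, gj i (v 0) = 0 := by
      intro i
      simp [hgjdef, hf]
    have hfw : ∀ j, f (w j) = 0 := by
      intro j; simp [hwdef, hf]
    have hgjs : ∀ i j, gj i (v j.succ) = if i = j then 1 else 0 := by
      intro i j
      have h1 : gj i (v j.succ) = gj i (w j) + f (v j.succ) * gj i (v 0) := by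
        conv_lhs => rw [hvw j]
        rw [map_add, map_smul, smul_eq_mul]
      have h2 : gj i (w j) = if i = j then 1 else 0 := by
        simp [hgjdef, hfw j, hg' i j]
      rw [h1, h2, hgj0 i, mul_zero, add_zero]
    refine ⟨Fin.cases (f - ∑ t, f (v t.succ) • gj t) gj, ?_⟩
    intro i j
    refine Fin.cases ?_ ?_ i
    · refine Fin.cases ?_ ?_ j
      · simp only [Fin.cases_zero, LinearMap.sub_apply, LinearMap.sum_apply,
          LinearMap.smul_apply, hf, smul_eq_mul]
        rw [Finset.sum_eq_zero fun t _ => by rw [hgj0 t, mul_zero]]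
        simp
      · intro t
        simp only [Fin.cases_zero, LinearMap.sub_apply, LinearMap.sum_apply,
          LinearMap.smul_apply, smul_eq_mul, hgjs]
        rw [Finset.sum_congr rfl (fun s _ => by rw [mul_ite, mul_one, mul_zero]),
          Finset.sum_ite_eq' Finset.univ t (fun s => f (v s.succ))]
        simp [(Fin.succ_ne_zero t).symm]
    · intro s
      refine Fin.cases ?_ ?_ j
      · simp [hgj0 s, Fin.succ_ne_zero s]
      · intro t
        simp only [Fin.cases_succ, hgjs s t, Fin.succ_inj]

/-- Two nested submodules of a finite module with the same cardinality are equal. -/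
lemma Submodule.eq_of_le_of_card_le' {R M : Type*} [CommRing R] [AddCommGroup M] [Module R M]
    [Finite M] {V K : Submodule R M} (h : V ≤ K) (hc : Nat.card K ≤ Nat.card V) : V = K := by
  apply SetLike.coe_injective
  apply Set.eq_of_subset_of_ncard_le h ?_ (Set.toFinite _)
  rw [← Nat.card_coe_set_eq, ← Nat.card_coe_set_eq]
  exact hc

end Aux

/-- abstraction of Proposition 2.3: if `L` has orthogonal complement
free of rank 1 and `V ⊆ L` is a free totally isotropic submodule of maximal rank
`n/2 + 1`, then `L^⊥ ⊆ V`. -/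
theorem stmt_19 {p q n : ℕ} (hp : p.Prime) (hodd : Odd p) (hq : ∃ k, q = p ^ k)
    (hq2 : 2 < q) (hn : Even n)
    (M : Type*) [AddCommGroup M] [Module (ZMod q) M]
    [Module.Free (ZMod q) M] [Module.Finite (ZMod q) M]
    (hrank : Module.finrank (ZMod q) M = n + 2)
    (B : M →ₗ[ZMod q] M →ₗ[ZMod q] ZMod q)
    (hBnd : Function.Bijective fun m : M => B m)
    (L : Submodule (ZMod q) M)
    [Module.Free (ZMod q) (orthoComp B L)]
    (hLperp : Module.finrank (ZMod q) (orthoComp B L) = 1)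
    (V : Submodule (ZMod q) M) (hVL : V ≤ L) [Module.Free (ZMod q) V]
    (hViso : ∀ v ∈ V, ∀ w ∈ V, B v w = 0)
    (hVrank : Module.finrank (ZMod q) V = n / 2 + 1) :
    orthoComp B L ≤ V := by
  classical
  haveI : NeZero q := ⟨by omega⟩
  obtain ⟨k, hqpk⟩ := hq
  have hk : 1 ≤ k := by
    rcases Nat.eq_zero_or_pos k with h | h
    · subst h; simp at hqpk; omega
    · exact h
  haveI : Fact (1 < q) := ⟨by omega⟩
  haveI : Finite M := Module.finite_of_finite (ZMod q)
  set r : ℕ := n / 2 + 1 with hr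
  let bV : Module.Basis (Fin r) (ZMod q) V := Module.finBasisOfFinrankEq (ZMod q) V hVrank
  let v : Fin r → M := fun i => V.subtype (bV i)
  have hvV : ∀ i, v i ∈ V := fun i => (bV i).2
  have hv : LinearIndependent (ZMod q) v :=
    bV.linearIndependent.map' V.subtype (Submodule.ker_subtype V)
  obtain ⟨g, hg⟩ := exists_dual_family hp hqpk hk r v hv
  let e : M ≃ₗ[ZMod q] Module.Dual (ZMod q) M := LinearEquiv.ofBijective B hBnd
  let ψ : M →ₗ[ZMod q] (Fin r → ZMod q) := LinearMap.pi fun i => B.flip (v i)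
  have hψ : ∀ m i, ψ m i = B m (v i) := fun m i => rfl
  have hψsurj : Function.Surjective ψ := by
    intro u
    refine ⟨e.symm (∑ t, u t • g t), ?_⟩
    funext i
    have hBe : B (e.symm (∑ t, u t • g t)) = ∑ t, u t • g t := by
      have h := e.apply_symm_apply (∑ t, u t • g t)
      simpa [e, LinearEquiv.ofBijective_apply] using h
    rw [hψ, hBe]
    simp [LinearMap.sum_apply, LinearMap.smul_apply, hg, mul_ite, Finset.sum_ite_eq']
  have hVK : V ≤ LinearMap.ker ψ := by
    intro x hx
    rw [LinearMap.mem_ker]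
    funext i
    show B x (v i) = 0
    exact hViso x hx (v i) (hvV i)
  have cardR : Nat.card (ZMod q) = q := Nat.card_zmod q
  have cardPi : Nat.card (Fin r → ZMod q) = q ^ r := by
    rw [Nat.card_fun, cardR, Nat.card_eq_fintype_card, Fintype.card_fin]
  have cardM : Nat.card M = q ^ (n + 2) := by
    rw [Nat.card_congr (Module.finBasisOfFinrankEq (ZMod q) M hrank).equivFun.toEquiv,
      Nat.card_fun, cardR, Nat.card_eq_fintype_card, Fintype.card_fin]
  have cardV : Nat.card V = q ^ r := by
    rw [Nat.card_congr bV.equivFun.toEquiv,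
      Nat.card_fun, cardR, Nat.card_eq_fintype_card, Fintype.card_fin]
  have cardQuot : Nat.card (M ⧸ LinearMap.ker ψ) = q ^ r := by
    rw [Nat.card_congr (LinearMap.quotKerEquivOfSurjective ψ hψsurj).toEquiv, cardPi]
  have hrr : r + r = n + 2 := by
    obtain ⟨m, hm⟩ := hn
    omega
  have cardKer : Nat.card (LinearMap.ker ψ) = q ^ r := by
    have h := Submodule.card_eq_card_quotient_mul_card (LinearMap.ker ψ)
    rw [cardM, cardQuot] at h
    have h2 : q ^ r * q ^ r = Nat.card (LinearMap.ker ψ) * q ^ r := by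
      rw [← pow_add, hrr, h]
    exact (Nat.eq_of_mul_eq_mul_right (pow_pos (by omega) r) h2.symm)
  have hsub : V = LinearMap.ker ψ :=
    Submodule.eq_of_le_of_card_le' hVK (by rw [cardKer, cardV])
  intro x hx
  rw [hsub]
  rw [LinearMap.mem_ker]
  funext i
  show B x (v i) = 0
  exact hx (v i) (hVL (hvV i))
end
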